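/- Let σ be a doubling measure on ℝⁿ. Then there is a constant C, depending only on n and the doubling constant of σ, such that for every cube Q in ℝⁿ and every 0 < δ < 1, |Q ∖ (1−δ)Q|_σ ≤ (C / ln(1/δ)) · |Q|_σ. -/

import Mathlib

open MeasureTheory Set Function
open scoped ENNReal NNReal

noncomputable section

/-- `ℝⁿ` with the Euclidean metric. -/
abbrev Rn (n : ℕ) : Type := EuclideanSpace ℝ (Fin n)

/-- The closed axes-parallel cube with center `c` and side length `l`. -/
def Cube {n : ℕ} (c : Rn n) (l : ℝ) : Set (Rn n) :=
  {x | ∀ i, |x i - c i| ≤ l / 2}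

/-- `μ` is doubling with doubling constant `D`: `|2Q|_μ ≤ D |Q|_μ` for all cubes `Q`. -/
def DoublingWith {n : ℕ} (μ : Measure (Rn n)) (D : ℝ) : Prop :=
  ∀ (c : Rn n) (l : ℝ), 0 < l → μ (Cube c (2 * l)) ≤ ENNReal.ofReal D * μ (Cube c l)

/-- `μ` has doubling exponent `θ`: `|2^{-k}Q|_μ ≥ 2^{-θ k}|Q|_μ` for all cubes `Q`, `k ∈ ℕ`. -/
def HasDoublingExp {n : ℕ} (μ : Measure (Rn n)) (θ : ℝ) : Prop :=
  ∀ (c : Rn n) (l : ℝ) (k : ℕ), 0 < l →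
    ENNReal.ofReal ((2 : ℝ) ^ (-(θ * (k : ℝ)))) * μ (Cube c l) ≤
      μ (Cube c ((2 : ℝ) ^ (-(k : ℝ)) * l))

/-- Coifman–Fefferman comparability with parameters `ε, η`:
for all cubes `Q` and compact `E ⊆ Q`, `|E|_ω/|Q|_ω < ε` implies `|E|_σ/|Q|_σ < η`. -/
def CFComparable {n : ℕ} (σ ω : Measure (Rn n)) (ε η : ℝ) : Prop :=
  ∀ (c : Rn n) (l : ℝ), 0 < l → ∀ E : Set (Rn n), IsCompact E → E ⊆ Cube c l →
    ω E < ENNReal.ofReal ε * ω (Cube c l) → σ E < ENNReal.ofReal η * σ (Cube c l)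

set_option maxHeartbeats 1000000

lemma cube_mono {n : ℕ} (c : Rn n) {l l' : ℝ} (h : l ≤ l') : Cube c l ⊆ Cube c l' :=
  fun x hx i => (hx i).trans (by linarith)

lemma isClosed_cube {n : ℕ} (c : Rn n) (l : ℝ) : IsClosed (Cube c l) := by
  have : Cube c l = ⋂ i, {x : Rn n | |x i - c i| ≤ l / 2} := by
    ext x; simp [Cube]
  rw [this]
  refine isClosed_iInter fun i => ?_
  have hc : Continuous fun x : Rn n => |x i - c i| := by
    exact ((continuous_apply i).comp (PiLp.continuous_ofLp 2 _)).sub continuous_const |>.abs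
  exact isClosed_le hc continuous_const

lemma measurableSet_cube {n : ℕ} (c : Rn n) (l : ℝ) : MeasurableSet (Cube c l) :=
  (isClosed_cube c l).measurableSet

lemma abs_coord_le_norm {n : ℕ} (v : Rn n) (i : Fin n) : |v i| ≤ ‖v‖ := by
  rw [EuclideanSpace.norm_eq]
  have h1 : |v i| = Real.sqrt ((v i)^2) := by
    rw [Real.sqrt_sq_eq_abs]
  rw [h1]
  apply Real.sqrt_le_sqrt
  have := Finset.single_le_sum (f := fun j => ‖v j‖^2) (fun j _ => sq_nonneg _) (Finset.mem_univ i)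
  simpa [Real.norm_eq_abs, sq_abs] using this

lemma closedBall_subset_cube {n : ℕ} (y : Rn n) (s : ℝ) :
    Metric.closedBall y (s/2) ⊆ Cube y s := by
  intro z hz i
  have := abs_coord_le_norm (z - y) i
  have hzi : (z - y) i = z i - y i := rfl
  rw [hzi] at this
  have hd : ‖z - y‖ ≤ s/2 := by
    simpa [dist_eq_norm] using hz
  linarith

lemma cube_subset_closedBall {n : ℕ} (y : Rn n) (s : ℝ) (hs : 0 ≤ s) :
    Cube y s ⊆ Metric.closedBall y (Real.sqrt n * (s/2)) := by
  intro z hz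
  rw [Metric.mem_closedBall, dist_eq_norm, EuclideanSpace.norm_eq]
  have h : ∑ i, ‖(z - y) i‖^2 ≤ n * (s/2)^2 := by
    calc ∑ i, ‖(z - y) i‖^2 ≤ ∑ _i : Fin n, (s/2)^2 := by
          refine Finset.sum_le_sum fun i _ => ?_
          have hzi : (z - y) i = z i - y i := rfl
          have := hz i
          rw [Real.norm_eq_abs, hzi, sq_abs]
          nlinarith [abs_nonneg (z i - y i), sq_abs (z i - y i), abs_le.mp (hz i)]
      _ = n * (s/2)^2 := by simp [mul_comm]
  calc Real.sqrt (∑ i, ‖(z - y) i‖^2) ≤ Real.sqrt (n * (s/2)^2) := Real.sqrt_le_sqrt h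
    _ = Real.sqrt n * (s/2) := by
        rw [Real.sqrt_mul (by positivity), Real.sqrt_sq (by positivity)]

lemma sqrt_nat_le {n : ℕ} : Real.sqrt n ≤ n + 1 := by
  have : (n:ℝ) ≤ ((n:ℝ)+1)^2 := by nlinarith [Nat.cast_nonneg (α := ℝ) n]
  calc Real.sqrt n ≤ Real.sqrt (((n:ℝ)+1)^2) := Real.sqrt_le_sqrt this
    _ = (n:ℝ)+1 := Real.sqrt_sq (by positivity)


lemma nat_pow_bound {n : ℕ} : 16 * (n:ℝ) + 20 ≤ 2^(n+5) := by
  induction n with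
  | zero => norm_num
  | succ m ih =>
    have h16 : (16:ℝ) ≤ 2^(m+5) := by
      have : (0:ℝ) ≤ m := Nat.cast_nonneg m
      linarith
    have h2 : (2:ℝ)^(m+1+5) = 2^(m+5) + 2^(m+5) := by ring
    push_cast
    rw [h2]
    push_cast at ih
    linarith

section
variable {n : ℕ} {D : ℝ} {σ : Measure (Rn n)}

lemma cube_doub_iter (hσ : DoublingWith σ D) (y : Rn n) (m : ℕ) {s : ℝ} (hs : 0 < s) :
    σ (Cube y (2^m * s)) ≤ (ENNReal.ofReal (max D 1))^m * σ (Cube y s) := by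
  induction m with
  | zero => simp
  | succ m ih =>
    have h1 : σ (Cube y (2^(m+1) * s)) ≤ ENNReal.ofReal (max D 1) * σ (Cube y (2^m * s)) := by
      have := hσ y (2^m * s) (by positivity)
      have h2 : (2:ℝ)^(m+1) * s = 2 * (2^m * s) := by ring
      rw [h2]
      refine this.trans ?_
      exact mul_le_mul_left (ENNReal.ofReal_le_ofReal (le_max_left _ _)) _
    calc σ (Cube y (2^(m+1) * s)) ≤ ENNReal.ofReal (max D 1) * σ (Cube y (2^m * s)) := h1
      _ ≤ ENNReal.ofReal (max D 1) * ((ENNReal.ofReal (max D 1))^m * σ (Cube y s)) :=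
          mul_le_mul_right ih _
      _ = (ENNReal.ofReal (max D 1))^(m+1) * σ (Cube y s) := by ring

lemma ball_doub (hσ : DoublingWith σ D) (y : Rn n) {ρ : ℝ} (hρ : 0 < ρ) :
    σ (Metric.closedBall y (2*ρ)) ≤ (ENNReal.ofReal (max D 1))^(n+2) * σ (Metric.closedBall y ρ) := by
  have h1 : Metric.closedBall y (2*ρ) ⊆ Cube y (4*ρ) := by
    have := closedBall_subset_cube y (4*ρ)
    rwa [show (4*ρ)/2 = 2*ρ by ring] at this
  have h2 : (4:ℝ)*ρ = 2^(n+2) * (4*ρ/2^(n+2)) := by field_simp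
  have h3 : Cube y (4*ρ/2^(n+2)) ⊆ Metric.closedBall y ρ := by
    refine (cube_subset_closedBall y _ (by positivity)).trans (Metric.closedBall_subset_closedBall ?_)
    have hsq : Real.sqrt n ≤ n + 1 := sqrt_nat_le
    have hn : (n:ℝ) + 1 ≤ 2^(n+1) := by
      have := Nat.lt_two_pow_self (n := n)
      have : (n:ℝ) < 2^n := by exact_mod_cast this
      have h2n : (2:ℝ)^(n+1) = 2^n + 2^n := by ring
      have h1n : (1:ℝ) ≤ 2^n := one_le_pow₀ (by norm_num)
      linarith
    have hpow : (0:ℝ) < 2^(n+2) := by positivity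
    rw [div_div]
    have hs0 : 0 ≤ Real.sqrt n := Real.sqrt_nonneg n
    calc Real.sqrt n * (4*ρ/(2^(n+2)*2)) = Real.sqrt n * ρ / 2^(n+1) := by ring
      _ ≤ ρ := by
          rw [div_le_iff₀ (by positivity : (0:ℝ) < 2^(n+1))]
          have : (2:ℝ)^(n+1) ≥ Real.sqrt n := hsq.trans hn
          nlinarith
  calc σ (Metric.closedBall y (2*ρ)) ≤ σ (Cube y (4*ρ)) := measure_mono h1
    _ = σ (Cube y (2^(n+2) * (4*ρ/2^(n+2)))) := by rw [← h2]
    _ ≤ (ENNReal.ofReal (max D 1))^(n+2) * σ (Cube y (4*ρ/2^(n+2))) :=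
        cube_doub_iter hσ y (n+2) (by positivity)
    _ ≤ _ := mul_le_mul_right (measure_mono h3) _

lemma ball_doub_iter (hσ : DoublingWith σ D) (y : Rn n) (j : ℕ) {ρ : ℝ} (hρ : 0 < ρ) :
    σ (Metric.closedBall y (2^j * ρ)) ≤
      (ENNReal.ofReal (max D 1))^(j*(n+2)) * σ (Metric.closedBall y ρ) := by
  induction j with
  | zero => simp
  | succ j ih =>
    have h2 : (2:ℝ)^(j+1) * ρ = 2 * (2^j * ρ) := by ring
    rw [h2]
    calc σ (Metric.closedBall y (2 * (2^j*ρ)))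
        ≤ (ENNReal.ofReal (max D 1))^(n+2) * σ (Metric.closedBall y (2^j*ρ)) :=
          ball_doub hσ y (by positivity)
      _ ≤ (ENNReal.ofReal (max D 1))^(n+2) * ((ENNReal.ofReal (max D 1))^(j*(n+2)) * σ (Metric.closedBall y ρ)) :=
          mul_le_mul_right ih _
      _ = _ := by rw [← mul_assoc, ← pow_add]; ring_nf

end


lemma shell_bound {n : ℕ} {D : ℝ} {σ : Measure (Rn n)} (hσ : DoublingWith σ D)
    (c : Rn n) {l δ : ℝ} (k : ℕ) (hl : 0 < l) (hδ : 0 < δ) (hk : 1 ≤ k)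
    (hδk : δ ≤ (1/2:ℝ)^(k+3)) :
    σ (Cube c l \ Cube c ((1 - δ) * l)) ≤
      (ENNReal.ofReal (max D 1))^((n+6)*(n+2)) *
        σ (Cube c ((1 - (1/2:ℝ)^(k+1)) * l) \ Cube c ((1 - (1/2:ℝ)^k) * l)) := by
  set a : ℝ := (1/2:ℝ)^k with ha_def
  have ha : 0 < a := by positivity
  have ha2 : a ≤ 1/2 := by
    rw [ha_def]
    calc ((1:ℝ)/2)^k ≤ (1/2)^1 := pow_le_pow_of_le_one (by norm_num) (by norm_num) hk
      _ = 1/2 := by norm_num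
  have hpow1 : ((1:ℝ)/2)^(k+1) = a/2 := by rw [pow_succ, ha_def]; ring
  have hpow3 : ((1:ℝ)/2)^(k+3) = a/8 := by
    rw [show k+3 = k+1+1+1 by ring, pow_succ, pow_succ, pow_succ, ha_def]; ring
  rw [hpow3] at hδk
  rw [hpow1]
  set ρ : ℝ := a*l/32 with hρ_def
  have hρ : 0 < ρ := by positivity
  set s : ℝ := 1 - 3*a/4 with hs_def
  have hs1 : 5/8 ≤ s := by rw [hs_def]; linarith
  have hs2 : s ≤ 1 := by rw [hs_def]; linarith
  set φ : Rn n → Rn n := fun x => c + s • (x - c) with hφ_def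
  have hφc : ∀ (x : Rn n) (i : Fin n), φ x i - c i = s * (x i - c i) := by
    intro x i
    show (c + s • (x - c)) i - c i = s * (x i - c i)
    simp only [PiLp.add_apply, PiLp.smul_apply, PiLp.sub_apply, smul_eq_mul]
    ring
  set S : Set (Rn n) := Cube c l \ Cube c ((1 - δ) * l) with hS_def
  set T : Set (Rn n) := Cube c ((1 - a/2) * l) \ Cube c ((1 - a) * l) with hT_def
  set E : ℝ≥0∞ := ENNReal.ofReal (max D 1) with hE_def
  clear_value a ρ s
  -- (G1)
  have hG1 : ∀ x ∈ S, Metric.closedBall (φ x) (ρ/2) ⊆ T := by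
    intro x hx z hz
    obtain ⟨hxQ, hxout⟩ := hx
    have hcoord : ∀ i, |z i - φ x i| ≤ ρ/2 := by
      intro i
      have h1 : (z - φ x) i = z i - φ x i := rfl
      have := abs_coord_le_norm (z - φ x) i
      rw [h1] at this
      refine this.trans ?_
      rw [← dist_eq_norm] at *
      simpa [Metric.mem_closedBall] using hz
    constructor
    · intro i
      have h1 := hcoord i
      have h2 : |φ x i - c i| = s * |x i - c i| := by
        rw [hφc x i, abs_mul, abs_of_nonneg (by linarith : (0:ℝ) ≤ s)]
      have h3 : |x i - c i| ≤ l/2 := hxQ i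
      have h4 : |z i - c i| ≤ |z i - φ x i| + |φ x i - c i| := by
        have := abs_sub_abs_le_abs_sub (z i - c i) (z i - φ x i)
        have h5 := abs_add_le (z i - φ x i) (φ x i - c i)
        calc |z i - c i| = |(z i - φ x i) + (φ x i - c i)| := by
              rw [show z i - c i = (z i - φ x i) + (φ x i - c i) by ring]
          _ ≤ _ := h5
      rw [h2] at h4
      have h6 : s * |x i - c i| ≤ s * (l/2) :=
        mul_le_mul_of_nonneg_left h3 (by linarith)
      have : |z i - c i| ≤ ρ/2 + s*(l/2) := by linarith
      refine this.trans ?_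
      rw [hρ_def, hs_def]
      nlinarith [mul_pos ha hl]
    · intro hmem
      simp only [Cube, Set.mem_setOf_eq] at hxout
      push_neg at hxout
      obtain ⟨i₀, hi₀⟩ := hxout
      have h1 := hcoord i₀
      have h2 := hmem i₀
      have h3 : s * |x i₀ - c i₀| - ρ/2 ≤ |z i₀ - c i₀| := by
        have h4 : |φ x i₀ - c i₀| = s * |x i₀ - c i₀| := by
          rw [hφc x i₀, abs_mul, abs_of_nonneg (by linarith : (0:ℝ) ≤ s)]
        have h5 : |φ x i₀ - c i₀| - |z i₀ - φ x i₀| ≤ |z i₀ - c i₀| := by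
          have := abs_sub_abs_le_abs_sub (φ x i₀ - c i₀) (φ x i₀ - z i₀)
          have he : (φ x i₀ - c i₀) - (φ x i₀ - z i₀) = z i₀ - c i₀ := by ring
          rw [he] at this
          have : |φ x i₀ - c i₀| - |φ x i₀ - z i₀| ≤ |z i₀ - c i₀| := this
          rwa [abs_sub_comm (φ x i₀) (z i₀)] at this
        linarith
      have hδ1 : δ < 1 := by linarith
      have h6 : s * ((1-δ)*l/2) < s * |x i₀ - c i₀| := by
        apply mul_lt_mul_of_pos_left hi₀ (by linarith)
      have hgoal : (1-a)*l/2 < |z i₀ - c i₀| := by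
        have : s * ((1-δ)*l/2) - ρ/2 ≥ (1-a)*l/2 := by
          rw [hρ_def, hs_def]
          nlinarith [mul_pos ha hl, mul_nonneg (mul_nonneg ha.le hδ.le) hl.le,
            mul_nonneg hδ.le hl.le, mul_le_mul_of_nonneg_right hδk hl.le]
        linarith
      linarith
  -- (G2)
  have hG2 : ∀ x ∈ S, Metric.closedBall x (4*ρ) ⊆
      Metric.closedBall (φ x) (2^(n+6) * (ρ/2)) := by
    intro x hx
    apply Metric.closedBall_subset_closedBall'
    have hd : dist x (φ x) = (1-s) * ‖x - c‖ := by
      rw [dist_eq_norm]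
      have : x - φ x = (1-s) • (x - c) := by
        rw [hφ_def]
        simp only []
        module
      rw [this, norm_smul, Real.norm_eq_abs, abs_of_nonneg (by linarith : (0:ℝ) ≤ 1-s)]
    have hxc : ‖x - c‖ ≤ Real.sqrt n * (l/2) := by
      have := cube_subset_closedBall c l (le_of_lt hl) hx.1
      rwa [Metric.mem_closedBall, dist_eq_norm] at this
    have hsq : Real.sqrt n ≤ n + 1 := sqrt_nat_le
    have hnp : 16 * (n:ℝ) + 20 ≤ 2^(n+5) := nat_pow_bound
    have h1s : (1-s) = 3*a/4 := by rw [hs_def]; ring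
    have hterm : dist x (φ x) ≤ 12 * Real.sqrt n * ρ := by
      rw [hd]
      calc (1-s) * ‖x - c‖ ≤ (1-s) * (Real.sqrt n * (l/2)) := by
            apply mul_le_mul_of_nonneg_left hxc (by linarith)
        _ = 12 * Real.sqrt n * ρ := by rw [h1s, hρ_def]; ring
    have hsn : 0 ≤ Real.sqrt n := Real.sqrt_nonneg n
    have h2 : (2:ℝ)^(n+6) * (ρ/2) = 2^(n+5) * ρ := by ring
    rw [h2]
    have h12 : 12 * Real.sqrt n * ρ ≤ 12 * ((n:ℝ)+1) * ρ :=
      mul_le_mul_of_nonneg_right (by linarith : 12 * Real.sqrt n ≤ 12*((n:ℝ)+1)) hρ.le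
    have hmul : (16*(n:ℝ)+20) * ρ ≤ 2^(n+5) * ρ := mul_le_mul_of_nonneg_right hnp hρ.le
    have hnρ : 0 ≤ (n:ℝ) * ρ := by positivity
    linarith
  -- contraction
  have hφdist : ∀ x y : Rn n, dist (φ x) (φ y) = s * dist x y := by
    intro x y
    rw [dist_eq_norm, dist_eq_norm]
    have : φ x - φ y = s • (x - y) := by rw [hφ_def]; simp only []; module
    rw [this, norm_smul, Real.norm_eq_abs, abs_of_nonneg (by linarith : (0:ℝ) ≤ s)]
  -- Vitali
  obtain ⟨u, huS, hdisj, hcov⟩ :=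
    Vitali.exists_disjoint_subfamily_covering_enlargement_closedBall S id (fun _ => ρ) ρ
      (fun _ _ => le_refl ρ) 4 (by norm_num)
  simp only [id] at hdisj hcov
  have hu_count : u.Countable := by
    apply hdisj.countable_of_nonempty_interior
    intro b _
    exact ⟨b, Metric.ball_subset_interior_closedBall (Metric.mem_ball_self hρ)⟩
  have hScov : S ⊆ ⋃ b ∈ u, Metric.closedBall b (4*ρ) := by
    intro x hx
    obtain ⟨b, hb, hsub⟩ := hcov x hx
    exact Set.mem_biUnion hb (hsub (Metric.mem_closedBall_self (le_of_lt hρ)))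
  -- disjointness of inner balls
  have hdisj' : u.PairwiseDisjoint (fun b => Metric.closedBall (φ b) (ρ/2)) := by
    intro b hb b' hb' hne
    have hd := hdisj hb hb' hne
    have hdd : 2*ρ < dist b b' := by
      by_contra hcon
      push_neg at hcon
      set m := midpoint ℝ b b' with hm
      have h1 : dist b m ≤ ρ := by
        rw [hm, dist_left_midpoint]
        simp only [Real.norm_ofNat]
        linarith
      have h2 : dist b' m ≤ ρ := by
        rw [hm, midpoint_comm, dist_left_midpoint]
        simp only [Real.norm_ofNat]
        rw [dist_comm] at hcon
        linarith
      exact Set.disjoint_left.mp hd (Metric.mem_closedBall'.mpr h1)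
        (Metric.mem_closedBall'.mpr h2)
    apply Metric.closedBall_disjoint_closedBall
    rw [hφdist]
    nlinarith [hρ, hs1, mul_lt_mul_of_pos_left hdd (show (0:ℝ) < s by linarith)]
  -- main chain
  have step1 : σ S ≤ ∑' b : u, σ (Metric.closedBall b (4*ρ)) :=
    (measure_mono hScov).trans (measure_biUnion_le σ hu_count _)
  have step2 : ∀ b : u, σ (Metric.closedBall (b:Rn n) (4*ρ)) ≤
      E^((n+6)*(n+2)) * σ (Metric.closedBall (φ b) (ρ/2)) := by
    rintro ⟨b, hb⟩
    calc σ (Metric.closedBall b (4*ρ))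
        ≤ σ (Metric.closedBall (φ b) (2^(n+6) * (ρ/2))) := measure_mono (hG2 b (huS hb))
      _ ≤ E^((n+6)*(n+2)) * σ (Metric.closedBall (φ b) (ρ/2)) :=
          ball_doub_iter hσ (φ b) (n+6) (by positivity)
  have step3 : σ S ≤ E^((n+6)*(n+2)) * ∑' b : u, σ (Metric.closedBall (φ b) (ρ/2)) := by
    calc σ S ≤ ∑' b : u, σ (Metric.closedBall (b:Rn n) (4*ρ)) := step1
      _ ≤ ∑' b : u, E^((n+6)*(n+2)) * σ (Metric.closedBall (φ b) (ρ/2)) :=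
          ENNReal.tsum_le_tsum step2
      _ = _ := ENNReal.tsum_mul_left
  have step4 : ∑' b : u, σ (Metric.closedBall (φ (b:Rn n)) (ρ/2)) ≤ σ T := by
    rw [← measure_biUnion hu_count hdisj'
      (fun b _ => measurableSet_closedBall)]
    apply measure_mono
    exact Set.iUnion₂_subset fun b hb => hG1 b (huS hb)
  calc σ S ≤ E^((n+6)*(n+2)) * ∑' b : u, σ (Metric.closedBall (φ (b:Rn n)) (ρ/2)) := step3
    _ ≤ E^((n+6)*(n+2)) * σ T := mul_le_mul_right step4 _

/-- Doubling measures do not charge boundary shells: if `σ` is doubling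
with doubling constant `D`, then there is `C`, depending only on `n` and `D`, with
`|Q \ (1-δ)Q|_σ ≤ (C / ln(1/δ)) |Q|_σ` for every cube `Q` and every `0 < δ < 1`. -/

theorem statement14
    (n : ℕ) (D : ℝ) (hD : 0 < D) :
    ∃ C : ℝ, 0 < C ∧
      ∀ σ : Measure (Rn n), IsLocallyFiniteMeasure σ → DoublingWith σ D →
      ∀ (c : Rn n) (l δ : ℝ), 0 < l → 0 < δ → δ < 1 →
        σ (Cube c l \ Cube c ((1 - δ) * l)) ≤
          ENNReal.ofReal (C / Real.log (1 / δ)) * σ (Cube c l) := by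
  set Cr : ℝ := (max D 1)^((n+6)*(n+2)) with hCr_def
  have hCr1 : 1 ≤ Cr := one_le_pow₀ (le_max_right D 1)
  refine ⟨10 * Cr, by linarith, ?_⟩
  intro σ _ hσ c l δ hl hδ hδ1
  have hL0 : 0 < Real.log (1/δ) := Real.log_pos (by rw [lt_div_iff₀ hδ]; linarith)
  have hlog2lt : Real.log 2 < 0.6931471808 := Real.log_two_lt_d9
  have hlog2gt : (0.6931471803:ℝ) < Real.log 2 := Real.log_two_gt_d9
  by_cases hδ32 : δ ≤ 1/32
  · -- main case
    set x : ℝ := Real.logb 2 (1/δ) with hx_def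
    have h1δ : (32:ℝ) ≤ 1/δ := by rw [le_div_iff₀ hδ]; linarith
    have hlog32 : Real.log 32 = 5 * Real.log 2 := by
      rw [show (32:ℝ) = 2^(5:ℕ) by norm_num, Real.log_pow]
      norm_num
    have hL5 : 5 * Real.log 2 ≤ Real.log (1/δ) := by
      rw [← hlog32]
      exact Real.log_le_log (by norm_num) h1δ
    have hxL : x * Real.log 2 = Real.log (1/δ) := by
      rw [hx_def, Real.logb, div_mul_cancel₀]
      exact ne_of_gt (Real.log_pos (by norm_num))
    have hx5 : 5 ≤ x := by nlinarith
    set K : ℕ := ⌊x⌋₊ - 3 with hK_def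
    have hfloor5 : 5 ≤ ⌊x⌋₊ := Nat.le_floor (by exact_mod_cast hx5)
    have hK2 : 2 ≤ K := by omega
    have hKcast : (K:ℝ) = (⌊x⌋₊:ℝ) - 3 := by
      rw [hK_def]
      have : (3:ℕ) ≤ ⌊x⌋₊ := by omega
      push_cast [Nat.cast_sub this]
      ring
    have hKup : (K:ℝ) + 3 ≤ x := by
      rw [hKcast]
      have := Nat.floor_le (by linarith : (0:ℝ) ≤ x)
      linarith
    have hKlow : x - 4 < K := by
      rw [hKcast]
      have := Nat.lt_floor_add_one x
      linarith
    -- per-shell inequality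
    have hshell : ∀ k ∈ Finset.Icc 1 K,
        σ (Cube c l \ Cube c ((1 - δ) * l)) ≤
          (ENNReal.ofReal (max D 1))^((n+6)*(n+2)) *
            σ (Cube c ((1 - (1/2:ℝ)^(k+1)) * l) \ Cube c ((1 - (1/2:ℝ)^k) * l)) := by
      intro k hk
      rw [Finset.mem_Icc] at hk
      apply shell_bound hσ c k hl hδ hk.1
      -- δ ≤ (1/2)^(k+3)
      have hk3 : ((k:ℝ)+3) ≤ x := by
        have : (k:ℝ) ≤ K := by exact_mod_cast hk.2
        linarith
      have h2x : (2:ℝ)^((k+3:ℕ):ℝ) ≤ (2:ℝ)^x := by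
        apply Real.rpow_le_rpow_of_exponent_le (by norm_num)
        push_cast; linarith
      rw [Real.rpow_natCast] at h2x
      have h2logb : (2:ℝ)^x = 1/δ := by
        rw [hx_def]
        exact Real.rpow_logb (by norm_num) (by norm_num) (by positivity)
      rw [h2logb] at h2x
      have hp : (0:ℝ) < 2^(k+3) := by positivity
      rw [div_pow, one_pow, le_div_iff₀ hp]
      calc δ * 2^(k+3) ≤ δ * (1/δ) := by
            apply mul_le_mul_of_nonneg_left _ hδ.le
            exact h2x.trans (le_refl _)
        _ = 1 := by field_simp
    -- shells are pairwise disjoint and inside Q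
    set T : ℕ → Set (Rn n) :=
      fun k => Cube c ((1 - (1/2:ℝ)^(k+1)) * l) \ Cube c ((1 - (1/2:ℝ)^k) * l) with hT_def
    have hTsub : ∀ k, 1 ≤ k → T k ⊆ Cube c l := by
      intro k _
      refine Set.diff_subset.trans (cube_mono c ?_)
      have : (0:ℝ) ≤ (1/2:ℝ)^(k+1) := by positivity
      nlinarith
    have hTdisj : (↑(Finset.Icc 1 K) : Set ℕ).PairwiseDisjoint T := by
      have key : ∀ k k' : ℕ, k < k' → Disjoint (T k) (T k') := by
        intro k k' hkk'
        have hsub : T k ⊆ Cube c ((1 - (1/2:ℝ)^k') * l) := by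
          refine Set.diff_subset.trans (cube_mono c ?_)
          have h1 : ((1/2:ℝ))^k' ≤ (1/2)^(k+1) :=
            pow_le_pow_of_le_one (by norm_num) (by norm_num) hkk'
          nlinarith
        exact (Set.disjoint_sdiff_right.mono_left hsub)
      intro k _ k' _ hne
      rcases lt_or_gt_of_ne hne with h | h
      · exact key k k' h
      · exact (key k' k h).symm
    -- summing
    have hsum : (K:ℝ≥0∞) * σ (Cube c l \ Cube c ((1 - δ) * l)) ≤
        (ENNReal.ofReal (max D 1))^((n+6)*(n+2)) * σ (Cube c l) := by
      have h1 : ∑ k ∈ Finset.Icc 1 K, σ (Cube c l \ Cube c ((1 - δ) * l)) ≤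
          ∑ k ∈ Finset.Icc 1 K, (ENNReal.ofReal (max D 1))^((n+6)*(n+2)) * σ (T k) :=
        Finset.sum_le_sum hshell
      have h2 : ∑ k ∈ Finset.Icc 1 K, (ENNReal.ofReal (max D 1))^((n+6)*(n+2)) * σ (T k)
          = (ENNReal.ofReal (max D 1))^((n+6)*(n+2)) * ∑ k ∈ Finset.Icc 1 K, σ (T k) := by
        rw [Finset.mul_sum]
      have h3 : ∑ k ∈ Finset.Icc 1 K, σ (T k) ≤ σ (Cube c l) := by
        rw [← measure_biUnion_finset hTdisj (fun k _ => ((measurableSet_cube _ _).diff (measurableSet_cube _ _)))]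
        apply measure_mono
        refine Set.iUnion₂_subset fun k hk => hTsub k ?_
        exact (Finset.mem_Icc.mp hk).1
      have h4 : ∑ k ∈ Finset.Icc 1 K, σ (Cube c l \ Cube c ((1 - δ) * l))
          = (K:ℝ≥0∞) * σ (Cube c l \ Cube c ((1 - δ) * l)) := by
        rw [Finset.sum_const, Nat.card_Icc]
        simp [nsmul_eq_mul]
      rw [h4] at h1
      calc (K:ℝ≥0∞) * σ (Cube c l \ Cube c ((1 - δ) * l)) ≤ _ := h1
        _ = _ := h2
        _ ≤ _ := mul_le_mul_right h3 _
    -- conclude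
    have hK0 : (K:ℝ≥0∞) ≠ 0 := by exact_mod_cast (by omega : K ≠ 0)
    have hKt : (K:ℝ≥0∞) ≠ ⊤ := ENNReal.natCast_ne_top K
    have hE : (ENNReal.ofReal (max D 1))^((n+6)*(n+2)) = ENNReal.ofReal Cr := by
      rw [hCr_def, ENNReal.ofReal_pow (le_trans zero_le_one (le_max_right D 1))]
    have hstep : σ (Cube c l \ Cube c ((1 - δ) * l)) ≤
        (K:ℝ≥0∞)⁻¹ * (ENNReal.ofReal Cr * σ (Cube c l)) := by
      rw [← hE]
      calc σ (Cube c l \ Cube c ((1 - δ) * l))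
          = (K:ℝ≥0∞)⁻¹ * ((K:ℝ≥0∞) * σ (Cube c l \ Cube c ((1 - δ) * l))) := by
            rw [← mul_assoc, ENNReal.inv_mul_cancel hK0 hKt, one_mul]
        _ ≤ _ := mul_le_mul_right hsum _
    refine hstep.trans ?_
    rw [← mul_assoc]
    apply mul_le_mul_left
    -- (K)⁻¹ * ofReal Cr ≤ ofReal (10 Cr / L)
    have hL10K : Real.log (1/δ) ≤ 10 * K := by nlinarith
    have h10K : ENNReal.ofReal (Real.log (1/δ)) ≤ 10 * (K:ℝ≥0∞) := by
      calc ENNReal.ofReal (Real.log (1/δ)) ≤ ENNReal.ofReal (10 * K) :=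
            ENNReal.ofReal_le_ofReal hL10K
        _ = 10 * (K:ℝ≥0∞) := by
            rw [ENNReal.ofReal_mul (by norm_num)]
            simp [ENNReal.ofReal_natCast]
    rw [ENNReal.ofReal_div_of_pos hL0, ENNReal.ofReal_mul (by norm_num : (0:ℝ) ≤ 10)]
    have hinv : (K:ℝ≥0∞)⁻¹ ≤ ENNReal.ofReal 10 / ENNReal.ofReal (Real.log (1/δ)) := by
      rw [ENNReal.le_div_iff_mul_le (Or.inl (ne_of_gt (ENNReal.ofReal_pos.mpr hL0))) (Or.inl (ENNReal.ofReal_ne_top))]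
      calc (K:ℝ≥0∞)⁻¹ * ENNReal.ofReal (Real.log (1/δ)) ≤ (K:ℝ≥0∞)⁻¹ * (10 * K) :=
            mul_le_mul_right h10K _
        _ = 10 * ((K:ℝ≥0∞)⁻¹ * K) := by ring
        _ = 10 := by rw [ENNReal.inv_mul_cancel hK0 hKt, mul_one]
        _ = ENNReal.ofReal 10 := by norm_num
    calc (K:ℝ≥0∞)⁻¹ * ENNReal.ofReal Cr
        ≤ (ENNReal.ofReal 10 / ENNReal.ofReal (Real.log (1/δ))) * ENNReal.ofReal Cr :=
          mul_le_mul_left hinv _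
      _ = ENNReal.ofReal 10 * ENNReal.ofReal Cr / ENNReal.ofReal (Real.log (1/δ)) := by
          rw [div_eq_mul_inv, div_eq_mul_inv]; exact mul_right_comm _ _ _
  · -- trivial case: δ > 1/32
    push_neg at hδ32
    have hLle : Real.log (1/δ) ≤ 5 * Real.log 2 := by
      have h1 : (1:ℝ)/δ ≤ 32 := by rw [div_le_iff₀ hδ]; nlinarith
      have := Real.log_le_log (by positivity) h1
      rwa [show (32:ℝ) = 2^(5:ℕ) by norm_num, Real.log_pow, Nat.cast_ofNat] at this
    have hone : (1:ℝ) ≤ 10 * Cr / Real.log (1/δ) := by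
      rw [le_div_iff₀ hL0]
      nlinarith
    calc σ (Cube c l \ Cube c ((1 - δ) * l)) ≤ σ (Cube c l) := measure_mono Set.diff_subset
      _ = 1 * σ (Cube c l) := (one_mul _).symm
      _ ≤ _ := mul_le_mul_left (by rwa [ENNReal.one_le_ofReal]) _
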